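/- arXiv:1708.08517 — 5 statements merged into one kernel-verified Lean document; each statement's English description precedes it below -/
import Mathlib

section
/- Let p₀, p₁ ∈ ℝ, let ω ∈ {1, −1}, v > 0, Z ∈ ℂ \ {0}, λ ∈ ℂ, ŵ ∈ ℂ, and set τ := λ/(2πv), D_ω := −i·p₀ + ω·v·p₁ and D_{−ω} := −i·p₀ − ω·v·p₁. Suppose N : {↑,↓} × {↑,↓} → ℂ satisfies, for all σ, σ' ∈ {↑,↓}: D_ω · N(σ,σ') = −δ_{σσ'}·(1/(4πvZ²))·D_{−ω} + (1/(4πv))·D_{−ω}·ŵ·λ·(N(↑,σ') + N(↓,σ')), where δ_{σσ'} is 1 if σ = σ' and 0 otherwise. Define N^c := N(↑,↑) + N(↑,↓) + N(↓,↑) + N(↓,↓) and N^s := N(↑,↑) − N(↑,↓) − N(↓,↑) + N(↓,↓). Then: (i) (D_ω − τ·ŵ·D_{−ω})·N^c = −(1/(2πvZ²))·D_{−ω}; (ii) D_ω · N^s = −(1/(2πvZ²))·D_{−ω}. Moreover, if 1 − τŵ ≠ 0, then (i) is equivalent to D̃_ω · N^c = −(1/(2πvZ²))·D_{−ω}/(1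 − τŵ), where D̃_ω := −i·p₀ + ω·v·((1 + τŵ)/(1 − τŵ))·p₁. -/
/-- **From the anomalous Ward identity to the charge/spin density–density correlations.**
Spins are indexed by `Bool` (`true = ↑`, `false = ↓`). If the density–density correlations
`N σ σ'` satisfy the anomalous Ward identity, then the charge combination `N^c` satisfies
`(D_ω - τŵD_{-ω}) N^c = -(1/(2πvZ²)) D_{-ω}`, the spin combination `N^s` satisfies
`D_ω N^s = -(1/(2πvZ²)) D_{-ω}`, and, when `1 - τŵ ≠ 0`, the former is equivalent to
`D̃_ω N^c = -(1/(2πvZ²)) D_{-ω}/(1 - τŵ)` with the dressed symbol `D̃_ω`. -/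
theorem anomalous_ward_to_density_correlations
    (p₀ p₁ : ℝ) (ω : ℝ) (hω : ω = 1 ∨ ω = -1) (v : ℝ) (hv : 0 < v)
    (Z : ℂ) (hZ : Z ≠ 0) (lam w : ℂ) (Nf : Bool → Bool → ℂ)
    (hWI : ∀ σ σ' : Bool,
      (-Complex.I * (p₀ : ℂ) + (ω : ℂ) * (v : ℂ) * (p₁ : ℂ)) * Nf σ σ' =
        -(if σ = σ' then (1 : ℂ) else 0) * (1 / (4 * (Real.pi : ℂ) * (v : ℂ) * Z ^ 2)) *
            (-Complex.I * (p₀ : ℂ) - (ω : ℂ) * (v : ℂ) * (p₁ : ℂ))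
          + (1 / (4 * (Real.pi : ℂ) * (v : ℂ))) *
              (-Complex.I * (p₀ : ℂ) - (ω : ℂ) * (v : ℂ) * (p₁ : ℂ)) * w * lam *
              (Nf true σ' + Nf false σ')) :
    (((-Complex.I * (p₀ : ℂ) + (ω : ℂ) * (v : ℂ) * (p₁ : ℂ))
          - (lam / (2 * (Real.pi : ℂ) * (v : ℂ))) * w *
              (-Complex.I * (p₀ : ℂ) - (ω : ℂ) * (v : ℂ) * (p₁ : ℂ))) *
        (Nf true true + Nf true false + Nf false true + Nf false false)
      = -(1 / (2 * (Real.pi : ℂ) * (v : ℂ) * Z ^ 2)) *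
          (-Complex.I * (p₀ : ℂ) - (ω : ℂ) * (v : ℂ) * (p₁ : ℂ))) ∧
    ((-Complex.I * (p₀ : ℂ) + (ω : ℂ) * (v : ℂ) * (p₁ : ℂ)) *
        (Nf true true - Nf true false - Nf false true + Nf false false)
      = -(1 / (2 * (Real.pi : ℂ) * (v : ℂ) * Z ^ 2)) *
          (-Complex.I * (p₀ : ℂ) - (ω : ℂ) * (v : ℂ) * (p₁ : ℂ))) ∧
    (1 - (lam / (2 * (Real.pi : ℂ) * (v : ℂ))) * w ≠ 0 →
      ((((-Complex.I * (p₀ : ℂ) + (ω : ℂ) * (v : ℂ) * (p₁ : ℂ))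
            - (lam / (2 * (Real.pi : ℂ) * (v : ℂ))) * w *
                (-Complex.I * (p₀ : ℂ) - (ω : ℂ) * (v : ℂ) * (p₁ : ℂ))) *
          (Nf true true + Nf true false + Nf false true + Nf false false)
        = -(1 / (2 * (Real.pi : ℂ) * (v : ℂ) * Z ^ 2)) *
            (-Complex.I * (p₀ : ℂ) - (ω : ℂ) * (v : ℂ) * (p₁ : ℂ))) ↔
       ((-Complex.I * (p₀ : ℂ) + (ω : ℂ) * (v : ℂ) *
            ((1 + (lam / (2 * (Real.pi : ℂ) * (v : ℂ))) * w) /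
              (1 - (lam / (2 * (Real.pi : ℂ) * (v : ℂ))) * w)) * (p₁ : ℂ)) *
          (Nf true true + Nf true false + Nf false true + Nf false false)
        = -(1 / (2 * (Real.pi : ℂ) * (v : ℂ) * Z ^ 2)) *
            (-Complex.I * (p₀ : ℂ) - (ω : ℂ) * (v : ℂ) * (p₁ : ℂ)) /
            (1 - (lam / (2 * (Real.pi : ℂ) * (v : ℂ))) * w)))) := by
  have hπ : (Real.pi : ℂ) ≠ 0 := by exact_mod_cast Real.pi_ne_zero
  have hv' : (v : ℂ) ≠ 0 := by exact_mod_cast hv.ne'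
  have htt := hWI true true
  have htf := hWI true false
  have hft := hWI false true
  have hff := hWI false false
  simp only [if_pos rfl, Bool.true_eq_false, Bool.false_eq_true, if_false, if_true] at htt htf hft hff
  set D := -Complex.I * (p₀ : ℂ) + (ω : ℂ) * (v : ℂ) * (p₁ : ℂ) with hD
  set E := -Complex.I * (p₀ : ℂ) - (ω : ℂ) * (v : ℂ) * (p₁ : ℂ) with hE
  set S := Nf true true + Nf true false + Nf false true + Nf false false with hS
  have hA' : (2:ℂ) * (1 / (4 * (Real.pi:ℂ) * v * Z ^ 2)) = 1 / (2 * (Real.pi:ℂ) * v * Z ^ 2) := by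
    field_simp; ring
  have hB' : (2:ℂ) * (1 / (4 * (Real.pi:ℂ) * v)) = 1 / (2 * (Real.pi:ℂ) * v) := by
    field_simp; ring
  have hc : (D - lam / (2 * (Real.pi : ℂ) * v) * w * E) * S
      = -(1 / (2 * (Real.pi : ℂ) * v * Z ^ 2)) * E := by
    linear_combination htt + htf + hft + hff + E * hA' - lam * w * E * S * hB'
  refine ⟨hc, ?_, ?_⟩
  · linear_combination htt - htf - hft + hff + E * hA'
  · intro hne
    have key : D - lam / (2 * (Real.pi : ℂ) * v) * w * E
        = (1 - lam / (2 * (Real.pi : ℂ) * v) * w) *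
          (-Complex.I * (p₀ : ℂ) + (ω : ℂ) * (v : ℂ) *
            ((1 + lam / (2 * (Real.pi : ℂ) * v) * w) /
              (1 - lam / (2 * (Real.pi : ℂ) * v) * w)) * (p₁ : ℂ)) := by
      have h1 : (1 - lam / (2 * (Real.pi : ℂ) * v) * w) *
          ((1 + lam / (2 * (Real.pi : ℂ) * v) * w) /
            (1 - lam / (2 * (Real.pi : ℂ) * v) * w)) = 1 + lam / (2 * (Real.pi : ℂ) * v) * w :=
        mul_div_cancel₀ _ hne
      linear_combination (-((ω:ℂ) * (v:ℂ) * (p₁:ℂ))) * h1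
    constructor
    · intro h
      rw [key, mul_assoc] at h
      rw [eq_div_iff hne]
      linear_combination h
    · intro h
      rw [key, mul_assoc, h, mul_div_cancel₀ _ hne]
end

section
/- Let ω ∈ {1, −1}, v_s > 0, τ ∈ ℝ with |τ| ≤ 1/2, K ∈ ℂ, C₀ > 0, and let ŵ : ℝ² → ℝ satisfy ŵ(0,0) = 1 and |ŵ(p) − 1| ≤ C₀·‖p‖ for all p with ‖p‖ ≤ 1. Define v_c := v_s·(1+τ)/(1−τ) and, for p = (p₀,p₁) ≠ (0,0), v(p) := v_s·(1+τŵ(p))/(1−τŵ(p)) and N(p) := −(K/(1−τŵ(p)))·(−i p₀ − ω v_s p₁)/(−i p₀ + ω v(p) p₁). Then there exist ε > 0 and C₁ > 0, depending only on v_s, τ and C₀, such that for all p with 0 < ‖p‖ ≤ ε all the denominators above are nonzero and |N(p) − (−(K/(1−τ))·(−i p₀ − ω v_s p₁)/(−i p₀ + ω v_c p₁))| ≤ C₁·|K|·‖p‖. -/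
lemma abs_lin (x y : ℝ) :
    ‖(-Complex.I * (x:ℂ) + (y:ℂ))‖ = Real.sqrt (x ^ 2 + y ^ 2) := by
  rw [Complex.norm_def, Complex.normSq_apply]
  simp
  ring_nf

lemma sqrt_lb (x y m c : ℝ) (hm0 : 0 < m) (hm1 : m ≤ 1) (hmc : m ≤ c) :
    m * Real.sqrt (x ^ 2 + y ^ 2) ≤ Real.sqrt (x ^ 2 + (c * y) ^ 2) := by
  have h1 : m * Real.sqrt (x ^ 2 + y ^ 2) = Real.sqrt (m^2 * (x^2 + y^2)) := by
    rw [Real.sqrt_mul (sq_nonneg m), Real.sqrt_sq hm0.le]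
  have hm2 : m^2 ≤ 1 := by nlinarith
  have hc2 : m^2 ≤ c^2 := by nlinarith
  rw [h1]
  apply Real.sqrt_le_sqrt
  nlinarith [mul_le_mul_of_nonneg_right hm2 (sq_nonneg x),
    mul_le_mul_of_nonneg_right hc2 (sq_nonneg y)]

lemma sqrt_ub (x y c : ℝ) (hc : 0 ≤ c) :
    Real.sqrt (x ^ 2 + (c * y) ^ 2) ≤ (1 + c) * Real.sqrt (x ^ 2 + y ^ 2) := by
  have h1 : (1 + c) * Real.sqrt (x ^ 2 + y ^ 2) = Real.sqrt ((1+c)^2 * (x^2 + y^2)) := by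
    rw [Real.sqrt_mul (sq_nonneg _), Real.sqrt_sq (by linarith)]
  rw [h1]
  apply Real.sqrt_le_sqrt
  nlinarith [sq_nonneg x, sq_nonneg y, mul_nonneg hc (sq_nonneg x),
    mul_nonneg hc (sq_nonneg y), mul_nonneg (mul_nonneg hc hc) (sq_nonneg x)]

set_option maxHeartbeats 1000000 in
/-- **Small-momentum expansion of the charge density–density correlation.** For the spin
velocity `v_s > 0` and anomaly `τ` with `|τ| ≤ 1/2`, there exist `ε, C₁ > 0` (depending
only on `v_s, τ, C₀`) such that, for any chirality `ω = ±1`, amplitude `K`, and interaction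
`ŵ` with `ŵ(0) = 1` and `|ŵ(p) − 1| ≤ C₀‖p‖`, the correlation `N(p)` built from the
momentum-dependent velocity `v(p) = v_s(1+τŵ(p))/(1−τŵ(p))` differs from its value with
`v(p)` replaced by the charge velocity `v_c = v_s(1+τ)/(1−τ)` by at most `C₁|K|‖p‖`, all
denominators being nonzero, for `0 < ‖p‖ ≤ ε`. -/
theorem density_correlation_small_momentum
    (vs τ C₀ : ℝ) (hvs : 0 < vs) (hτ : |τ| ≤ 1 / 2) (hC₀ : 0 < C₀) :
    ∃ ε : ℝ, 0 < ε ∧ ∃ C₁ : ℝ, 0 < C₁ ∧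
      ∀ (ω : ℝ), (ω = 1 ∨ ω = -1) →
      ∀ (K : ℂ) (w : ℝ → ℝ → ℝ),
        w 0 0 = 1 →
        (∀ p₀ p₁ : ℝ, Real.sqrt (p₀ ^ 2 + p₁ ^ 2) ≤ 1 →
          |w p₀ p₁ - 1| ≤ C₀ * Real.sqrt (p₀ ^ 2 + p₁ ^ 2)) →
        ∀ p₀ p₁ : ℝ, 0 < Real.sqrt (p₀ ^ 2 + p₁ ^ 2) → Real.sqrt (p₀ ^ 2 + p₁ ^ 2) ≤ ε →
          (1 - τ * w p₀ p₁ ≠ 0) ∧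
          (1 - τ ≠ 0) ∧
          (-Complex.I * (p₀ : ℂ) +
              (ω : ℂ) * ((vs * (1 + τ * w p₀ p₁) / (1 - τ * w p₀ p₁) : ℝ) : ℂ) * (p₁ : ℂ)
            ≠ 0) ∧
          (-Complex.I * (p₀ : ℂ) +
              (ω : ℂ) * ((vs * (1 + τ) / (1 - τ) : ℝ) : ℂ) * (p₁ : ℂ) ≠ 0) ∧
          ‖((-(K / (1 - (τ : ℂ) * ((w p₀ p₁ : ℝ) : ℂ))) *
                ((-Complex.I * (p₀ : ℂ) - (ω : ℂ) * (vs : ℂ) * (p₁ : ℂ)) /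
                  (-Complex.I * (p₀ : ℂ) +
                    (ω : ℂ) * ((vs * (1 + τ * w p₀ p₁) / (1 - τ * w p₀ p₁) : ℝ) : ℂ) *
                      (p₁ : ℂ))))
              - (-(K / (1 - (τ : ℂ))) *
                  ((-Complex.I * (p₀ : ℂ) - (ω : ℂ) * (vs : ℂ) * (p₁ : ℂ)) /
                    (-Complex.I * (p₀ : ℂ) +
                      (ω : ℂ) * ((vs * (1 + τ) / (1 - τ) : ℝ) : ℂ) * (p₁ : ℂ)))))‖
            ≤ C₁ * ‖K‖ * Real.sqrt (p₀ ^ 2 + p₁ ^ 2) := by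
  obtain ⟨hτl, hτu⟩ := abs_le.mp hτ
  set m : ℝ := min 1 (vs/7) with hmdef
  have hm0 : 0 < m := lt_min one_pos (by positivity)
  have hm1 : m ≤ 1 := min_le_left _ _
  have hmv : m ≤ vs/7 := min_le_right _ _
  set B : ℝ := (1+7*vs)/2 + 16*vs with hBdef
  have hB0 : 0 < B := by positivity
  refine ⟨min 1 (1/(2*C₀)), lt_min one_pos (by positivity),
    8*(1+vs)*C₀*B/m^2, by positivity, ?_⟩
  intro ω hω K w hw0 hwbd p₀ p₁ hn0 hnε
  set n := Real.sqrt (p₀ ^ 2 + p₁ ^ 2) with hn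
  set r := w p₀ p₁ with hrdef
  -- basic bounds
  have hn1 : n ≤ 1 := hnε.trans (min_le_left _ _)
  have hn2 : C₀ * n ≤ 1/2 := by
    have : n ≤ 1/(2*C₀) := hnε.trans (min_le_right _ _)
    calc C₀ * n ≤ C₀ * (1/(2*C₀)) := by
          exact mul_le_mul_of_nonneg_left this hC₀.le
      _ = 1/2 := by
          field_simp
  have hr1 : |r - 1| ≤ C₀ * n := hwbd p₀ p₁ hn1
  have hrb : |r - 1| ≤ 1/2 := hr1.trans hn2
  obtain ⟨hrl, hru⟩ := abs_le.mp hrb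
  have hωs : ω ^ 2 = 1 := by rcases hω with h | h <;> simp [h]
  have hωa : |ω| = 1 := by rcases hω with h | h <;> simp [h]
  have hp1 : |p₁| ≤ n := by
    rw [hn, ← Real.sqrt_sq_eq_abs]
    exact Real.sqrt_le_sqrt (by nlinarith [sq_nonneg p₀])
  -- scalar bounds
  have hr0 : (0:ℝ) ≤ r := by linarith
  have hq1 : τ * r ≤ (1/2) * r := mul_le_mul_of_nonneg_right hτu hr0
  have hq2 : -(1/2) * r ≤ τ * r := mul_le_mul_of_nonneg_right hτl hr0
  have hu1 : 1/4 ≤ 1 - τ * r := by linarith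
  have hu2 : 1 - τ * r ≤ 7/4 := by linarith
  have hs1 : 1/4 ≤ 1 + τ * r := by linarith
  have hs2 : 1 + τ * r ≤ 7/4 := by linarith
  have ht1 : 1/2 ≤ 1 - τ := by linarith
  have ht2 : 1 - τ ≤ 3/2 := by linarith
  set v : ℝ := vs * (1 + τ * r) / (1 - τ * r) with hvdef
  set vc : ℝ := vs * (1 + τ) / (1 - τ) with hvcdef
  have hvl : vs/7 ≤ v := by
    rw [hvdef, le_div_iff₀ (by linarith)]
    have e1 := mul_le_mul_of_nonneg_left hu2 (by positivity : (0:ℝ) ≤ vs/7)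
    have e2 := mul_le_mul_of_nonneg_left hs1 hvs.le
    linarith
  have hvu : v ≤ 7*vs := by
    rw [hvdef, div_le_iff₀ (by linarith)]
    have e1 := mul_le_mul_of_nonneg_left hs2 hvs.le
    have e2 := mul_le_mul_of_nonneg_left hu1 (by positivity : (0:ℝ) ≤ 7*vs)
    linarith
  have hvcl : vs/7 ≤ vc := by
    rw [hvcdef, le_div_iff₀ (by linarith)]
    have e1 := mul_le_mul_of_nonneg_left ht2 (by positivity : (0:ℝ) ≤ vs/7)
    have e2 := mul_le_mul_of_nonneg_left (show (1:ℝ)/2 ≤ 1 + τ by linarith) hvs.le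
    linarith
  have hvcu : vc ≤ 7*vs := by
    rw [hvcdef, div_le_iff₀ (by linarith)]
    have e1 := mul_le_mul_of_nonneg_left (show (1:ℝ) + τ ≤ 3/2 by linarith) hvs.le
    have e2 := mul_le_mul_of_nonneg_left ht1 (by positivity : (0:ℝ) ≤ 7*vs)
    linarith
  have hv0 : 0 < v := lt_of_lt_of_le (by positivity) hvl
  have hvc0 : 0 < vc := lt_of_lt_of_le (by positivity) hvcl
  -- complex quantities
  set A : ℂ := -Complex.I * (p₀ : ℂ) - (ω : ℂ) * (vs : ℂ) * (p₁ : ℂ) with hAdef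
  set D : ℂ := -Complex.I * (p₀ : ℂ) + (ω : ℂ) * ((v : ℝ) : ℂ) * (p₁ : ℂ) with hDdef
  set E : ℂ := -Complex.I * (p₀ : ℂ) + (ω : ℂ) * ((vc : ℝ) : ℂ) * (p₁ : ℂ) with hEdef
  set u' : ℂ := 1 - (τ : ℂ) * ((r : ℝ) : ℂ) with hu'def
  set t' : ℂ := 1 - (τ : ℂ) with ht'def
  have hDabs : ‖D‖ = Real.sqrt (p₀ ^ 2 + (v * p₁) ^ 2) := by
    have h1 : D = -Complex.I * (p₀ : ℂ) + ((ω * v * p₁ : ℝ) : ℂ) := by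
      rw [hDdef]; push_cast; ring
    have h2 : (ω * v * p₁) ^ 2 = (v * p₁) ^ 2 := by
      have : (ω * v * p₁) ^ 2 = ω ^ 2 * (v * p₁) ^ 2 := by ring
      rw [this, hωs, one_mul]
    rw [h1, abs_lin, h2]
  have hEabs : ‖E‖ = Real.sqrt (p₀ ^ 2 + (vc * p₁) ^ 2) := by
    have h1 : E = -Complex.I * (p₀ : ℂ) + ((ω * vc * p₁ : ℝ) : ℂ) := by
      rw [hEdef]; push_cast; ring
    have h2 : (ω * vc * p₁) ^ 2 = (vc * p₁) ^ 2 := by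
      have : (ω * vc * p₁) ^ 2 = ω ^ 2 * (vc * p₁) ^ 2 := by ring
      rw [this, hωs, one_mul]
    rw [h1, abs_lin, h2]
  have hAabs : ‖A‖ = Real.sqrt (p₀ ^ 2 + (vs * p₁) ^ 2) := by
    have h1 : A = -Complex.I * (p₀ : ℂ) + ((-(ω * vs * p₁) : ℝ) : ℂ) := by
      rw [hAdef]; push_cast; ring
    have h2 : (-(ω * vs * p₁)) ^ 2 = (vs * p₁) ^ 2 := by
      have : (-(ω * vs * p₁)) ^ 2 = ω ^ 2 * (vs * p₁) ^ 2 := by ring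
      rw [this, hωs, one_mul]
    rw [h1, abs_lin, h2]
  have hDlb : m * n ≤ ‖D‖ := by
    rw [hDabs, hn]; exact sqrt_lb p₀ p₁ m v hm0 hm1 (hmv.trans hvl)
  have hElb : m * n ≤ ‖E‖ := by
    rw [hEabs, hn]; exact sqrt_lb p₀ p₁ m vc hm0 hm1 (hmv.trans hvcl)
  have hAub : ‖A‖ ≤ (1 + vs) * n := by
    rw [hAabs, hn]; exact sqrt_ub p₀ p₁ vs hvs.le
  have hEub : ‖E‖ ≤ (1 + 7*vs) * n := by
    rw [hEabs, hn]
    calc Real.sqrt (p₀ ^ 2 + (vc * p₁) ^ 2)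
        ≤ (1 + vc) * Real.sqrt (p₀ ^ 2 + p₁ ^ 2) := sqrt_ub p₀ p₁ vc hvc0.le
      _ ≤ (1 + 7*vs) * Real.sqrt (p₀ ^ 2 + p₁ ^ 2) := by
          apply mul_le_mul_of_nonneg_right (by linarith) (Real.sqrt_nonneg _)
  have hmn0 : 0 < m * n := by positivity
  have hDne : D ≠ 0 := by
    intro h
    rw [h, norm_zero] at hDlb
    exact absurd hDlb (not_le.mpr hmn0)
  have hEne : E ≠ 0 := by
    intro h
    rw [h, norm_zero] at hElb
    exact absurd hElb (not_le.mpr hmn0)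
  have hu'r : u' = (((1 - τ * r : ℝ)) : ℂ) := by rw [hu'def]; push_cast; ring
  have ht'r : t' = (((1 - τ : ℝ)) : ℂ) := by rw [ht'def]; push_cast; ring
  have hu'abs : ‖u'‖ = 1 - τ * r := by
    rw [hu'r, Complex.norm_real, Real.norm_eq_abs, abs_of_pos (by linarith)]
  have ht'abs : ‖t'‖ = 1 - τ := by
    rw [ht'r, Complex.norm_real, Real.norm_eq_abs, abs_of_pos (by linarith)]
  have hu'ne : u' ≠ 0 := by
    intro h; rw [h, norm_zero] at hu'abs; linarith
  have ht'ne : t' ≠ 0 := by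
    intro h; rw [h, norm_zero] at ht'abs; linarith
  refine ⟨by intro h; rw [h] at hu1; linarith, by intro h; rw [h] at ht1; linarith,
    hDne, hEne, ?_⟩
  -- velocity difference bound
  have hvd : |vc - v| ≤ 8 * vs * C₀ * n := by
    have hid : vc - v = 2 * vs * τ * (1 - r) / ((1 - τ) * (1 - τ * r)) := by
      rw [hvcdef, hvdef]
      field_simp
      ring
    have hprod : (0:ℝ) < (1 - τ) * (1 - τ * r) := mul_pos (by linarith) (by linarith)
    rw [hid, abs_div]
    rw [div_le_iff₀ (by rw [abs_of_pos hprod]; exact hprod)]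
    have h1 : |2 * vs * τ * (1 - r)| ≤ vs * (C₀ * n) := by
      rw [abs_mul, abs_mul, abs_mul]
      rw [abs_of_pos (by norm_num : (0:ℝ) < 2), abs_of_pos hvs]
      have h1r : |1 - r| ≤ C₀ * n := by rw [abs_sub_comm]; exact hr1
      have hτa : |τ| ≤ 1/2 := hτ
      calc 2 * vs * |τ| * |1 - r| ≤ 2 * vs * (1/2) * (C₀ * n) := by
            apply mul_le_mul
            · apply mul_le_mul_of_nonneg_left hτa (by positivity)
            · exact h1r
            · exact abs_nonneg _
            · positivity
        _ = vs * (C₀ * n) := by ring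
    have h2 : (1:ℝ)/8 ≤ |(1 - τ) * (1 - τ * r)| := by
      rw [abs_of_pos (mul_pos (by linarith) (by linarith))]
      have := mul_le_mul ht1 hu1 (by norm_num) (by linarith)
      linarith
    calc |2 * vs * τ * (1 - r)| ≤ vs * (C₀ * n) := h1
      _ = 8 * vs * C₀ * n * (1/8) := by ring
      _ ≤ 8 * vs * C₀ * n * |(1 - τ) * (1 - τ * r)| := by
          apply mul_le_mul_of_nonneg_left h2 (by positivity)
  -- numerator bound
  have hX : ‖(t' * E - u' * D)‖ ≤ B * C₀ * n ^ 2 := by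
    have hsplit : t' * E - u' * D = ((τ * r - τ : ℝ) : ℂ) * E + u' * (E - D) := by
      rw [hu'r, ht'r]; push_cast; ring
    have hED : E - D = ((ω * (vc - v) * p₁ : ℝ) : ℂ) := by
      rw [hEdef, hDdef]; push_cast; ring
    have hEDabs : ‖(E - D)‖ ≤ 8 * vs * C₀ * n * n := by
      rw [hED, Complex.norm_real, Real.norm_eq_abs, abs_mul, abs_mul, hωa, one_mul]
      calc |vc - v| * |p₁| ≤ (8 * vs * C₀ * n) * n := by
            apply mul_le_mul hvd hp1 (abs_nonneg _) (by positivity)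
        _ = 8 * vs * C₀ * n * n := by ring
    have h1 : ‖(((τ * r - τ : ℝ) : ℂ) * E)‖ ≤ (C₀ * n / 2) * ((1 + 7*vs) * n) := by
      rw [norm_mul, Complex.norm_real, Real.norm_eq_abs]
      apply mul_le_mul _ hEub (norm_nonneg _) (by positivity)
      have : τ * r - τ = τ * (r - 1) := by ring
      rw [this, abs_mul]
      calc |τ| * |r - 1| ≤ (1/2) * (C₀ * n) := by
            apply mul_le_mul hτ hr1 (abs_nonneg _) (by norm_num)
        _ = C₀ * n / 2 := by ring
    have h2 : ‖(u' * (E - D))‖ ≤ 2 * (8 * vs * C₀ * n * n) := by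
      rw [norm_mul]
      apply mul_le_mul _ hEDabs (norm_nonneg _) (by norm_num)
      rw [hu'abs]; linarith
    calc ‖(t' * E - u' * D)‖
        ≤ ‖(((τ * r - τ : ℝ) : ℂ) * E)‖ + ‖(u' * (E - D))‖ := by
          rw [hsplit]; exact norm_add_le _ _
      _ ≤ (C₀ * n / 2) * ((1 + 7*vs) * n) + 2 * (8 * vs * C₀ * n * n) := by
          exact add_le_add h1 h2
      _ = B * C₀ * n ^ 2 := by rw [hBdef]; ring
  -- key algebraic identity
  have key : -(K / u') * (A / D) - -(K / t') * (A / E)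
      = -(K * (A * (t' * E - u' * D))) / (u' * t' * D * E) := by
    field_simp [hu'ne, ht'ne, hDne, hEne]
    ring
  rw [key]
  rw [norm_div, norm_neg, norm_mul, norm_mul]
  have hden : (1/8 : ℝ) * ((m * n) * (m * n)) ≤ ‖(u' * t' * D * E)‖ := by
    rw [norm_mul, norm_mul, norm_mul, hu'abs, ht'abs]
    have h12 : (1/8 : ℝ) ≤ (1 - τ * r) * (1 - τ) := by
      have := mul_le_mul hu1 ht1 (by norm_num) (by linarith)
      linarith
    have h34 : (m * n) * (m * n) ≤ ‖D‖ * ‖E‖ :=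
      mul_le_mul hDlb hElb hmn0.le (norm_nonneg _)
    calc (1/8 : ℝ) * ((m * n) * (m * n))
        ≤ ((1 - τ * r) * (1 - τ)) * (‖D‖ * ‖E‖) := by
          apply mul_le_mul h12 h34 (by positivity)
            (mul_nonneg (by linarith) (by linarith))
      _ = (1 - τ * r) * (1 - τ) * ‖D‖ * ‖E‖ := by ring
  have hnum : ‖K‖ * (‖A‖ * ‖(t' * E - u' * D)‖)
      ≤ ‖K‖ * ((1 + vs) * n * (B * C₀ * n ^ 2)) := by
    apply mul_le_mul_of_nonneg_left _ (norm_nonneg K)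
    apply mul_le_mul hAub hX (norm_nonneg _) (by positivity)
  calc ‖K‖ * (‖A‖ * ‖(t' * E - u' * D)‖) /
        ‖(u' * t' * D * E)‖
      ≤ ‖K‖ * ((1 + vs) * n * (B * C₀ * n ^ 2)) /
        ((1/8 : ℝ) * ((m * n) * (m * n))) := by
        apply div_le_div₀ (by positivity) hnum (by positivity) hden
    _ = 8*(1+vs)*C₀*B/m^2 * ‖K‖ * n := by
        field_simp [hm0.ne', hn0.ne']
end

section
/- Let ω ∈ {1, −1}, v_s > 0, v_c > 0, λ, X₀, X₁, A₀, A₁ ∈ ℂ, and ε > 0. For p = (p₀,p₁) ∈ ℝ² \ {(0,0)} define F(p) := λ·(−i p₀ − ω v_s p₁)/(−i p₀ + ω v_c p₁) (the denominator is nonzero for real p ≠ 0), and define η₀(p) := i and η₁(p) := (1 − e^{i p₁})/(−i p₁) for p₁ ≠ 0, η₁(p) := 1 for p₁ = 0. Suppose R₀, R₁ : ℝ² → ℂ are continuous at (0,0) with R₀(0,0) = R₁(0,0) = 0, and that for all p with 0 < ‖p‖ < ε: η₀(p)·p₀·(X₀·F(p) + A₀ + R₀(p)) + η₁(p)·p₁·(X₁·F(p)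 + A₁ + R₁(p)) = 0. Then A₀ = −λ·X₀ and A₁ = λ·(v_s/v_c)·X₁. -/
open Complex

/-- **Determination of the Schwinger terms from the Ward identity.** Suppose the lattice
Ward identity `η₀(p)p₀(X₀F(p) + A₀ + R₀(p)) + η₁(p)p₁(X₁F(p) + A₁ + R₁(p)) = 0` holds for
all small nonzero `p`, where `F(p) = λ(-ip₀ - ωv_s p₁)/(-ip₀ + ωv_c p₁)`, `η₀ = i`,
`η₁(p) = (1 - e^{ip₁})/(-ip₁)` (`= 1` at `p₁ = 0`), and `R₀, R₁` are continuous and vanish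
at `0`. Then `A₀ = -λX₀` and `A₁ = λ(v_s/v_c)X₁`. -/
theorem schwinger_terms_from_ward_identity
    (ω : ℝ) (hω : ω = 1 ∨ ω = -1) (vs vc : ℝ) (hvs : 0 < vs) (hvc : 0 < vc)
    (lam X₀ X₁ A₀ A₁ : ℂ) (ε : ℝ) (hε : 0 < ε)
    (R₀ R₁ : ℝ × ℝ → ℂ)
    (hR₀c : ContinuousAt R₀ 0) (hR₀0 : R₀ 0 = 0)
    (hR₁c : ContinuousAt R₁ 0) (hR₁0 : R₁ 0 = 0)
    (hWI : ∀ p : ℝ × ℝ, 0 < ‖p‖ → ‖p‖ < ε →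
      Complex.I * (p.1 : ℂ) *
          (X₀ * (lam * ((-Complex.I * (p.1 : ℂ) - (ω : ℂ) * (vs : ℂ) * (p.2 : ℂ)) /
              (-Complex.I * (p.1 : ℂ) + (ω : ℂ) * (vc : ℂ) * (p.2 : ℂ)))) + A₀ + R₀ p)
        + (if p.2 = 0 then (1 : ℂ)
            else (1 - Complex.exp (Complex.I * (p.2 : ℂ))) / (-Complex.I * (p.2 : ℂ))) *
            (p.2 : ℂ) *
          (X₁ * (lam * ((-Complex.I * (p.1 : ℂ) - (ω : ℂ) * (vs : ℂ) * (p.2 : ℂ)) /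
              (-Complex.I * (p.1 : ℂ) + (ω : ℂ) * (vc : ℂ) * (p.2 : ℂ)))) + A₁ + R₁ p)
        = 0) :
    A₀ = -lam * X₀ ∧ A₁ = lam * ((vs / vc : ℝ) : ℂ) * X₁ := by
  have hω0 : ω ≠ 0 := by rcases hω with h | h <;> rw [h] <;> norm_num
  have hωC : (ω : ℂ) ≠ 0 := by exact_mod_cast hω0
  have hvcC : (vc : ℂ) ≠ 0 := by exact_mod_cast hvc.ne'
  constructor
  · -- A₀
    have key : ∀ δ : ℝ, 0 < δ → ‖lam * X₀ + A₀‖ < δ := by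
      intro δ hδ
      obtain ⟨η, hη, hball⟩ := Metric.continuousAt_iff.mp hR₀c δ hδ
      set t : ℝ := min ε η / 2 with ht
      have ht0 : 0 < t := by positivity
      have htε : t < ε := by
        have := min_le_left ε η; simp only [ht]; linarith
      have htη : t < η := by
        have := min_le_right ε η; simp only [ht]; linarith
      set p : ℝ × ℝ := (t, 0) with hp
      have hnp : ‖p‖ = t := by
        simp [hp, Prod.norm_def, abs_of_pos ht0, ht0.le]
      have hwi := hWI p (by rw [hnp]; exact ht0) (by rw [hnp]; exact htε)
      have htC : (t : ℂ) ≠ 0 := by exact_mod_cast ht0.ne'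
      have hden : -Complex.I * (t : ℂ) ≠ 0 := mul_ne_zero (neg_ne_zero.mpr I_ne_zero) htC
      simp only [hp, Complex.ofReal_zero, mul_zero, add_zero, sub_zero, if_pos rfl,
        zero_mul, mul_one, div_self hden] at hwi
      have h1 : Complex.I * (t : ℂ) ≠ 0 := mul_ne_zero I_ne_zero htC
      have h2 : X₀ * lam + A₀ + R₀ (t, 0) = 0 :=
        (mul_eq_zero.mp hwi).resolve_left h1
      have h3 : lam * X₀ + A₀ = -R₀ (t, 0) := by linear_combination h2
      rw [h3, norm_neg]
      have : dist ((t, 0) : ℝ × ℝ) 0 < η := by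
        rw [dist_zero_right]
        show ‖p‖ < η
        rw [hnp]; exact htη
      have := hball this
      rwa [hR₀0, dist_zero_right] at this
    have hc : lam * X₀ + A₀ = 0 := by
      by_contra h
      exact absurd (key _ (norm_pos_iff.mpr h)) (lt_irrefl _)
    linear_combination hc
  · -- A₁
    have key : ∀ δ : ℝ, 0 < δ → ‖A₁ - lam * ((vs : ℂ) / (vc : ℂ)) * X₁‖ < δ := by
      intro δ hδ
      obtain ⟨η, hη, hball⟩ := Metric.continuousAt_iff.mp hR₁c δ hδ
      set t : ℝ := min (min ε η) 1 / 2 with ht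
      have ht0 : 0 < t := by positivity
      have htε : t < ε := by
        have h1 := min_le_left (min ε η) 1
        have h2 := min_le_left ε η
        simp only [ht]; nlinarith
      have htη : t < η := by
        have h1 := min_le_left (min ε η) 1
        have h2 := min_le_right ε η
        simp only [ht]; nlinarith
      have ht1 : t ≤ 1 / 2 := by
        have h1 := min_le_right (min ε η) 1
        simp only [ht]; linarith
      set p : ℝ × ℝ := (0, t) with hp
      have hnp : ‖p‖ = t := by
        simp [hp, Prod.norm_def, abs_of_pos ht0, ht0.le]
      have hwi := hWI p (by rw [hnp]; exact ht0) (by rw [hnp]; exact htε)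
      have htC : (t : ℂ) ≠ 0 := by exact_mod_cast ht0.ne'
      have htne : ¬ ((t:ℝ) = 0) := ht0.ne'
      have hexp : Complex.exp (Complex.I * (t : ℂ)) ≠ 1 := by
        intro h
        obtain ⟨n, hn⟩ := Complex.exp_eq_one_iff.mp h
        have hn' : (t : ℂ) = ((n * (2 * Real.pi) : ℝ) : ℂ) := by
          push_cast
          have := mul_left_cancel₀ I_ne_zero (by rw [hn]; ring : Complex.I * (t : ℂ) = Complex.I * ((n : ℂ) * (2 * (Real.pi : ℂ))))
          exact this
        have hre : t = n * (2 * Real.pi) := by exact_mod_cast hn'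
        have hπ := Real.pi_gt_three
        rcases lt_trichotomy n 0 with h' | h' | h'
        · have : (n : ℝ) ≤ -1 := by exact_mod_cast (by omega : n ≤ -1)
          nlinarith
        · rw [h'] at hre; norm_num at hre; linarith
        · have : (1 : ℝ) ≤ (n : ℝ) := by exact_mod_cast h'
          nlinarith
      have hF : ((0 : ℂ) - (ω : ℂ) * (vs : ℂ) * (t : ℂ)) /
          ((ω : ℂ) * (vc : ℂ) * (t : ℂ)) = -((vs : ℂ) / (vc : ℂ)) := by
        field_simp
        ring
      simp only [hp, Complex.ofReal_zero, mul_zero, zero_add, zero_mul, if_neg htne] at hwi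
      rw [hF] at hwi
      have hη₁ : (1 - Complex.exp (Complex.I * (t : ℂ))) / (-Complex.I * (t : ℂ)) * (t : ℂ) ≠ 0 := by
        apply mul_ne_zero _ htC
        apply div_ne_zero _ (mul_ne_zero (neg_ne_zero.mpr I_ne_zero) htC)
        exact sub_ne_zero.mpr fun h => hexp h.symm
      have h2 : X₁ * (lam * -((vs : ℂ) / (vc : ℂ))) + A₁ + R₁ (0, t) = 0 :=
        (mul_eq_zero.mp hwi).resolve_left hη₁
      have h3 : A₁ - lam * ((vs : ℂ) / (vc : ℂ)) * X₁ = -R₁ (0, t) := by linear_combination h2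
      rw [h3, norm_neg]
      have : dist ((0, t) : ℝ × ℝ) 0 < η := by
        rw [dist_zero_right]
        show ‖p‖ < η
        rw [hnp]; exact htη
      have := hball this
      rwa [hR₁0, dist_zero_right] at this
    have hc : A₁ - lam * ((vs : ℂ) / (vc : ℂ)) * X₁ = 0 := by
      by_contra h
      exact absurd (key _ (norm_pos_iff.mpr h)) (lt_irrefl _)
    have : ((vs / vc : ℝ) : ℂ) = (vs : ℂ) / (vc : ℂ) := by push_cast; ring
    rw [this]
    linear_combination hc
end

section
/- Let θ > 0, let h ≤ 0 be an integer, let K ≥ 0, and let b : ℤ → ℂ satisfy |b_j| ≤ K·2^{θ j} for all integers j with h ≤ j ≤ 0. Then there exists ν₀ ∈ ℂ with |ν₀| ≤ K such that the backward recursion ν_k = 2·ν_{k+1} + b_{k+1} (for integers h ≤ k ≤ −1), with this initial datum ν₀, produces a sequence satisfying |ν_k| ≤ K·2^{θ k} for all h ≤ k ≤ 0. (Explicitly, one may take ν₀ = −Σ_{j=h+1}^{0} 2^{j−1}·b_j, for which ν_k = −Σ_{j=h+1}^{k} 2^{j−k−1}·b_j.) -/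
/-- **Fine tuning of the chemical potential counterterm.** Given `θ > 0`, an infrared
scale `h ≤ 0`, `K ≥ 0`, and a beta function `b` with `|b_j| ≤ K 2^{θj}` for `h ≤ j ≤ 0`,
there is an initial datum `ν₀` with `|ν₀| ≤ K` such that the backward recursion
`ν_k = 2ν_{k+1} + b_{k+1}` produces a flow satisfying `|ν_k| ≤ K 2^{θk}` for all
`h ≤ k ≤ 0`. -/
theorem chemical_potential_flow (θ : ℝ) (hθ : 0 < θ) (h : ℤ) (hh : h ≤ 0)
    (K : ℝ) (hK : 0 ≤ K) (b : ℤ → ℂ)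
    (hb : ∀ j : ℤ, h ≤ j → j ≤ 0 → ‖b j‖ ≤ K * (2 : ℝ) ^ (θ * (j : ℝ))) :
    ∃ ν : ℤ → ℂ, ‖ν 0‖ ≤ K ∧
      (∀ k : ℤ, h ≤ k → k ≤ -1 → ν k = 2 * ν (k + 1) + b (k + 1)) ∧
      (∀ k : ℤ, h ≤ k → k ≤ 0 → ‖ν k‖ ≤ K * (2 : ℝ) ^ (θ * (k : ℝ))) := by
  set ν : ℤ → ℂ := fun k => -∑ j ∈ Finset.Icc (h + 1) k, (2 : ℂ) ^ (j - k - 1) * b j with hν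
  have two_ne : (2 : ℂ) ≠ 0 := two_ne_zero
  -- the recursion
  have hrec : ∀ k : ℤ, h ≤ k → k ≤ -1 → ν k = 2 * ν (k + 1) + b (k + 1) := by
    intro k hk _
    simp only [hν]
    have hins : Finset.Icc (h + 1) (k + 1) = insert (k + 1) (Finset.Icc (h + 1) k) := by
      ext j; simp only [Finset.mem_Icc, Finset.mem_insert]; omega
    rw [hins, Finset.sum_insert (by simp)]
    have hterm : ∀ j ∈ Finset.Icc (h + 1) k,
        (2 : ℂ) * ((2 : ℂ) ^ (j - (k + 1) - 1) * b j) = (2 : ℂ) ^ (j - k - 1) * b j := by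
      intro j _
      rw [show j - k - 1 = 1 + (j - (k + 1) - 1) by ring, zpow_add₀ two_ne, zpow_one]
      ring
    have hlast : (2 : ℂ) * ((2 : ℂ) ^ (k + 1 - (k + 1) - 1) * b (k + 1)) = b (k + 1) := by
      rw [show k + 1 - (k + 1) - 1 = -1 by ring, zpow_neg_one]
      field_simp
    rw [mul_neg, mul_add, Finset.mul_sum, Finset.sum_congr rfl hterm, hlast]
    ring
  -- base case: ν h = 0
  have hbase : ν h = 0 := by
    simp [hν, Finset.Icc_eq_empty_of_lt (by linarith : h + 1 > h)]
  -- the bound, by upward induction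
  have hbound : ∀ k : ℤ, h ≤ k → k ≤ 0 →
      ‖ν k‖ ≤ K * (2 : ℝ) ^ (θ * (k : ℝ)) := by
    intro k hk
    refine Int.le_induction (motive := fun k _ => k ≤ 0 → ‖ν k‖ ≤ K * (2 : ℝ) ^ (θ * (k : ℝ))) ?_ ?_ k hk
    · intro _
      rw [hbase]
      simp only [norm_zero]
      positivity
    · intro k hk' ih hk1
      have hk0 : k ≤ -1 := by linarith
      have hvk : ‖ν k‖ ≤ K * (2 : ℝ) ^ (θ * (k : ℝ)) := ih (by linarith)
      have hbk : ‖b (k + 1)‖ ≤ K * (2 : ℝ) ^ (θ * ((k : ℝ) + 1)) := by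
        have := hb (k + 1) (by linarith) (by linarith)
        push_cast at this ⊢
        exact this
      have heq : ν (k + 1) = (ν k - b (k + 1)) / 2 := by
        rw [hrec k hk' hk0]; ring
      have hmono : (2 : ℝ) ^ (θ * (k : ℝ)) ≤ (2 : ℝ) ^ (θ * ((k : ℝ) + 1)) := by
        apply Real.rpow_le_rpow_of_exponent_le one_le_two
        nlinarith
      calc ‖ν (k + 1)‖ = ‖ν k - b (k + 1)‖ / 2 := by
            rw [heq, norm_div]; simp
        _ ≤ (‖ν k‖ + ‖b (k + 1)‖) / 2 := by
            have := norm_sub_le (ν k) (b (k + 1))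
            linarith [norm_sub_le (ν k) (b (k + 1))]
        _ ≤ (K * (2 : ℝ) ^ (θ * ((k : ℝ) + 1)) + K * (2 : ℝ) ^ (θ * ((k : ℝ) + 1))) / 2 := by
            have : K * (2 : ℝ) ^ (θ * (k : ℝ)) ≤ K * (2 : ℝ) ^ (θ * ((k : ℝ) + 1)) := by
              exact mul_le_mul_of_nonneg_left hmono hK
            linarith
        _ = K * (2 : ℝ) ^ (θ * ((k : ℝ) + 1)) := by ring
        _ = K * (2 : ℝ) ^ (θ * (((k : ℤ) + 1 : ℤ) : ℝ)) := by push_cast; ring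
  refine ⟨ν, ?_, hrec, hbound⟩
  have := hbound 0 hh (le_refl 0)
  simpa using this
end

section
/- Let L ≥ 1 be a natural number, f : ZMod L → ℂ, and define the discrete derivative (∂f)(k) := f(k+1) − f(k) on ZMod L. Let x ∈ ℤ be such that exp(2πi·x/L) ≠ 1 (the exponential exp(−2πi·k·x/L) is well defined for k ∈ ZMod L). Then for every n ∈ ℕ: |Σ_{k ∈ ZMod L} exp(−2πi·k·x/L)·f(k)| ≤ |1 − exp(2πi·x/L)|^{−n} · Σ_{k ∈ ZMod L} |(∂ⁿ f)(k)|, where ∂ⁿ denotes the n-fold discrete derivative. -/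
/-- **Discrete summation by parts on `ZMod L`.** For `f : ZMod L → ℂ`, the discrete
derivative `(∂f)(k) = f(k+1) - f(k)`, and `x ∈ ℤ` with `e^{2πix/L} ≠ 1`, one has, for
every `n`, `|Σ_k e^{-2πi k x/L} f(k)| ≤ |1 - e^{2πix/L}|^{-n} Σ_k |(∂ⁿf)(k)|`. -/
theorem discrete_summation_by_parts (L : ℕ) [NeZero L] (f : ZMod L → ℂ) (x : ℤ)
    (hx : Complex.exp (2 * Real.pi * Complex.I * (x : ℂ) / (L : ℂ)) ≠ 1) :
    ∀ n : ℕ,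
      ‖(∑ k : ZMod L,
          Complex.exp (-(2 * Real.pi * Complex.I * ((k.val : ℕ) : ℂ) * (x : ℂ)) / (L : ℂ))
            * f k)‖
        ≤ (‖(1 - Complex.exp (2 * Real.pi * Complex.I * (x : ℂ) / (L : ℂ)))‖)⁻¹ ^ n *
          ∑ k : ZMod L,
            ‖((fun g : ZMod L → ℂ => fun j => g (j + 1) - g j)^[n] f k)‖ := by
  set π := Real.pi
  set I := Complex.I
  set w : ℂ := Complex.exp (2 * π * I * (x : ℂ) / (L : ℂ)) with hw
  set ζ : ℂ := Complex.exp (-(2 * π * I * (x : ℂ)) / (L : ℂ)) with hζ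
  set D : (ZMod L → ℂ) → (ZMod L → ℂ) := fun g => fun j => g (j + 1) - g j with hD
  set E : ZMod L → ℂ := fun k =>
    Complex.exp (-(2 * π * I * ((k.val : ℕ) : ℂ) * (x : ℂ)) / (L : ℂ)) with hE
  have hL0 : (L : ℂ) ≠ 0 := Nat.cast_ne_zero.mpr (NeZero.ne L)
  -- L ≠ 1
  have hL1 : 1 < L := by
    rcases Nat.lt_or_ge L 2 with h | h
    · interval_cases L
      · exact absurd rfl (NeZero.ne 0)
      · exfalso
        apply hx
        have : 2 * (π : ℂ) * I * (x : ℂ) / ((1 : ℕ) : ℂ) = (x : ℂ) * (2 * π * I) := by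
          push_cast; ring
        rw [hw, this]
        exact Complex.exp_int_mul_two_pi_mul_I x
    · omega
  have hζL : ζ ^ L = 1 := by
    rw [hζ, ← Complex.exp_nat_mul]
    have : (L : ℂ) * (-(2 * π * I * (x : ℂ)) / (L : ℂ)) = ((-x : ℤ) : ℂ) * (2 * π * I) := by
      field_simp
      push_cast
      ring
    rw [this]
    exact Complex.exp_int_mul_two_pi_mul_I (-x)
  have hζw : ζ * w = 1 := by
    rw [hζ, hw, ← Complex.exp_add,
      show -(2 * (π:ℂ) * I * (x:ℂ)) / (L:ℂ) + 2 * π * I * (x:ℂ) / (L:ℂ) = 0 from by ring,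
      Complex.exp_zero]
  have hEζ : ∀ k : ZMod L, E k = ζ ^ k.val := by
    intro k
    rw [hζ]
    show Complex.exp (-(2 * (π:ℂ) * I * ((k.val : ℕ) : ℂ) * (x:ℂ)) / (L:ℂ))
      = Complex.exp (-(2 * (π:ℂ) * I * (x:ℂ)) / (L:ℂ)) ^ k.val
    rw [show -(2 * (π:ℂ) * I * ((k.val : ℕ) : ℂ) * (x:ℂ)) / (L:ℂ)
        = ((k.val : ℕ) : ℂ) * (-(2 * (π:ℂ) * I * (x:ℂ)) / (L:ℂ)) from by ring,
      Complex.exp_nat_mul]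
  have hEabs : ∀ k : ZMod L, ‖E k‖ = 1 := by
    intro k
    have h1 : (-(2 * (π:ℂ) * I * ((k.val : ℕ) : ℂ) * (x : ℂ)) / (L : ℂ))
        = ((-(2 * π * (k.val : ℝ) * (x : ℝ) / (L : ℝ)) : ℝ) : ℂ) * I := by
      push_cast
      ring
    rw [hE]
    show ‖Complex.exp (-(2 * (π:ℂ) * I * ((k.val : ℕ) : ℂ) * (x:ℂ)) / (L:ℂ))‖ = 1
    rw [h1]
    exact Complex.norm_exp_ofReal_mul_I _
  have hEshift : ∀ k : ZMod L, E (k + 1) = ζ * E k := by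
    intro k
    rw [hEζ, hEζ]
    have hval : (k + 1 : ZMod L).val = (k.val + 1) % L := by
      rw [ZMod.val_add]
      congr 1
      rw [ZMod.val_one_eq_one_mod, Nat.mod_eq_of_lt hL1]
    rw [hval, ← pow_eq_pow_mod _ hζL, pow_succ]
    ring
  have hEsub : ∀ k : ZMod L, E (k - 1) = w * E k := by
    intro k
    have h := hEshift (k - 1)
    rw [sub_add_cancel] at h
    calc E (k - 1) = (w * ζ) * E (k - 1) := by rw [mul_comm w ζ, hζw, one_mul]
      _ = w * E k := by rw [mul_assoc, ← h]
  have hw1 : ‖1 - w‖ ≠ 0 := by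
    simpa [sub_eq_zero] using fun h => hx h.symm
  have hsum : ∀ g : ZMod L → ℂ,
      ∑ k : ZMod L, E k * (D g) k = (w - 1) * ∑ k : ZMod L, E k * g k := by
    intro g
    have h1 : ∑ k : ZMod L, E k * g (k + 1) = ∑ k : ZMod L, (w * E k) * g k := by
      refine Fintype.sum_equiv (Equiv.addRight (1 : ZMod L))
        (fun k => E k * g (k + 1)) (fun k => (w * E k) * g k) ?_
      intro k
      simp only [Equiv.coe_addRight]
      rw [← hEsub (k + 1), add_sub_cancel_right]
    simp only [hD, mul_sub]
    rw [Finset.sum_sub_distrib, h1, ← Finset.sum_sub_distrib, Finset.mul_sum]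
    exact Finset.sum_congr rfl fun k _ => by ring
  have main : ∀ (n : ℕ) (g : ZMod L → ℂ),
      ‖∑ k : ZMod L, E k * g k‖
        ≤ (‖1 - w‖)⁻¹ ^ n * ∑ k : ZMod L, ‖D^[n] g k‖ := by
    intro n
    induction n with
    | zero =>
      intro g
      simp only [pow_zero, one_mul, Function.iterate_zero, id_eq]
      calc ‖∑ k : ZMod L, E k * g k‖
          ≤ ∑ k : ZMod L, ‖E k * g k‖ := norm_sum_le _ _
        _ = ∑ k : ZMod L, ‖g k‖ := by
            refine Finset.sum_congr rfl fun k _ => ?_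
            rw [norm_mul, hEabs, one_mul]
    | succ n ih =>
      intro g
      have h := congrArg norm (hsum g)
      rw [norm_mul] at h
      have habs : ‖w - 1‖ = ‖1 - w‖ := by
        exact norm_sub_rev w 1
      rw [habs] at h
      have hS : ‖∑ k : ZMod L, E k * g k‖
          = (‖1 - w‖)⁻¹ * ‖∑ k : ZMod L, E k * (D g) k‖ := by
        rw [h, ← mul_assoc, inv_mul_cancel₀ hw1, one_mul]
      rw [hS]
      have h2 := ih (D g)
      calc (‖1 - w‖)⁻¹ * ‖∑ k : ZMod L, E k * (D g) k‖
          ≤ (‖1 - w‖)⁻¹ *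
            ((‖1 - w‖)⁻¹ ^ n * ∑ k : ZMod L, ‖D^[n] (D g) k‖) := by
            exact mul_le_mul_of_nonneg_left h2 (by positivity)
        _ = (‖1 - w‖)⁻¹ ^ (n + 1) *
            ∑ k : ZMod L, ‖D^[n + 1] g k‖ := by
            simp only [Function.iterate_succ_apply, pow_succ]
            ring
  intro n
  exact main n f
end
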